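/- Let n ≥ 1 and let t be an n × n complex matrix with tᵀt = I, det t = 1, and t^k = I for some integer k ≥ 1 (i.e. t ∈ SO_n(ℂ) of finite order). For λ ∈ ℂ let m_λ denote the dimension of the eigenspace ker(t − λI). Then the complex vector space { X ∈ M_n(ℂ) : Xᵀ = −X and tX = Xt } has dimension C(m_1, 2) + C(m_{−1}, 2) + (1/2)·∑_{λ ∈ ℂ, λ ≠ ±1} m_λ², where C(m, 2) = m(m−1)/2 and the sum (which has finitely many nonzero terms) is over all eigenvalues λ of t different from 1 and −1. -/

import Mathlib

open Module Matrix Polynomial Finset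

/-- The space of skew-symmetric `n × n` complex matrices commuting with `t`, i.e. the fixed
points of the adjoint action of `t` on the Lie algebra of `SO_n(ℂ)`. -/
noncomputable def skewCommuting (n : ℕ) (t : Matrix (Fin n) (Fin n) ℂ) :
    Submodule ℂ (Matrix (Fin n) (Fin n) ℂ) where
  carrier := {X | Xᵀ = -X ∧ t * X = X * t}
  zero_mem' := by simp
  add_mem' := by
    rintro X Y ⟨hX1, hX2⟩ ⟨hY1, hY2⟩
    refine ⟨by rw [transpose_add, hX1, hY1, neg_add], by rw [mul_add, add_mul, hX2, hY2]⟩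
  smul_mem' := by
    rintro c X ⟨hX1, hX2⟩
    refine ⟨by rw [transpose_smul, hX1, smul_neg], ?_⟩
    rw [Matrix.mul_smul, Matrix.smul_mul, hX2]

/-- The multiplicity of `λ` as an eigenvalue of the matrix `t`, i.e. the dimension of the
eigenspace `ker (t − λ·1)`. -/
noncomputable def eigMult (n : ℕ) (t : Matrix (Fin n) (Fin n) ℂ) (lam : ℂ) : ℕ :=
  finrank ℂ (LinearMap.ker (Matrix.toLin' (t - lam • 1)))


lemma exists_diag (n k : ℕ) (hk : 1 ≤ k) (t : Matrix (Fin n) (Fin n) ℂ) (htk : t ^ k = 1) :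
    ∃ (P Q : Matrix (Fin n) (Fin n) ℂ) (d : Fin n → ℂ),
      P * Q = 1 ∧ Q * P = 1 ∧ t = P * Matrix.diagonal d * Q := by
  classical
  set f : Module.End ℂ (Fin n → ℂ) := Matrix.toLinAlgEquiv' t with hf
  have hsq : Squarefree ((X : ℂ[X]) ^ k - C 1) :=
    (Polynomial.separable_X_pow_sub_C (1 : ℂ)
      (Nat.cast_ne_zero.mpr (by omega)) one_ne_zero).squarefree
  have hz : Polynomial.aeval f ((X : ℂ[X]) ^ k - C 1) = 0 := by
    simp only [map_sub, aeval_X_pow, aeval_C]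
    have : f ^ k = Matrix.toLinAlgEquiv' (t ^ k) := by rw [map_pow]
    rw [this, htk]
    simp [Algebra.algebraMap_eq_smul_one]
  have hs : f.IsSemisimple :=
    Module.End.isSemisimple_of_squarefree_aeval_eq_zero hsq hz
  have heig : ∀ μ : ℂ, f.maxGenEigenspace μ = f.eigenspace μ :=
    hs.isFinitelySemisimple.maxGenEigenspace_eq_eigenspace
  have htop : ⨆ μ : ℂ, f.eigenspace μ = ⊤ := by
    simp_rw [← heig]; exact f.iSup_maxGenEigenspace_eq_top
  have hint : DirectSum.IsInternal (fun μ : ℂ => f.eigenspace μ) :=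
    DirectSum.isInternal_submodule_of_iSupIndep_of_iSup_eq_top
      f.eigenspaces_iSupIndep htop
  let b0 := hint.collectedBasis (fun μ => Module.finBasis ℂ (f.eigenspace μ))
  haveI := FiniteDimensional.fintypeBasisIndex b0
  have hcard : Fintype.card ((μ : ℂ) × Fin (finrank ℂ (f.eigenspace μ))) = n := by
    rw [← finrank_eq_card_basis b0]
    simp
  let e := Fintype.equivFinOfCardEq hcard
  let b := b0.reindex e
  let d : Fin n → ℂ := fun i => (e.symm i).1
  have heb : ∀ i, f (b i) = d i • b i := by
    intro i
    have hm : b0 (e.symm i) ∈ f.eigenspace (d i) :=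
      hint.collectedBasis_mem (fun μ => Module.finBasis ℂ (f.eigenspace μ)) (e.symm i)
    have hbi : b i = b0 (e.symm i) := Basis.reindex_apply b0 e i
    rw [hbi]
    exact Module.End.mem_eigenspace_iff.mp hm
  let P : Matrix (Fin n) (Fin n) ℂ := (Pi.basisFun ℂ (Fin n)).toMatrix ⇑b
  haveI : Invertible P := (Pi.basisFun ℂ (Fin n)).invertibleToMatrix b
  refine ⟨P, ⅟P, d, mul_invOf_self P, invOf_mul_self P, ?_⟩
  have key : t * P = P * Matrix.diagonal d := by
    ext i j
    have hP : ∀ x j, P x j = b j x := by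
      intro x j
      show (Pi.basisFun ℂ (Fin n)).toMatrix ⇑b x j = b j x
      rw [Basis.toMatrix_apply, Pi.basisFun_repr]
    rw [Matrix.mul_apply, Matrix.mul_diagonal]
    have : ∑ x, t i x * P x j = (t.mulVec (b j)) i := by
      simp only [Matrix.mulVec, dotProduct, hP]
    rw [this]
    have := heb j
    have h2 : t.mulVec (b j) = d j • b j := by
      rw [← Matrix.toLinAlgEquiv'_apply, this]
    rw [h2, Pi.smul_apply, smul_eq_mul, hP, mul_comm]
  calc t = t * (P * ⅟P) := by rw [mul_invOf_self, mul_one]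
    _ = (t * P) * ⅟P := by rw [mul_assoc]
    _ = P * Matrix.diagonal d * ⅟P := by rw [key]

lemma eigMult_add_rank (n : ℕ) (t : Matrix (Fin n) (Fin n) ℂ) (lam : ℂ) :
    eigMult n t lam + (t - lam • 1).rank = n := by
  have h := LinearMap.finrank_range_add_finrank_ker (Matrix.toLin' (t - lam • (1 : Matrix (Fin n) (Fin n) ℂ)))
  rw [Matrix.toLin'_apply'] at h
  rw [eigMult, Matrix.toLin'_apply', Matrix.rank]
  rw [Nat.add_comm, h, Module.finrank_pi]
  simp

lemma rank_smul' (n : ℕ) (A : Matrix (Fin n) (Fin n) ℂ) (c : ℂ) (hc : c ≠ 0) :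
    (c • A).rank = A.rank := by
  have h1 : c • A = (c • (1 : Matrix (Fin n) (Fin n) ℂ)) * A := by
    rw [Matrix.smul_mul, Matrix.one_mul]
  rw [h1, Matrix.rank_mul_eq_right_of_isUnit_det]
  rw [Matrix.smul_one_eq_diagonal, Matrix.det_diagonal]
  simp [hc]

lemma eigMult_eq_count (n : ℕ) (t P Q : Matrix (Fin n) (Fin n) ℂ) (d : Fin n → ℂ)
    (hPQ : P * Q = 1) (ht : t = P * Matrix.diagonal d * Q) (lam : ℂ) :
    eigMult n t lam = (Finset.univ.filter (fun i => d i = lam)).card := by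
  classical
  have hdetP : IsUnit P.det := by
    refine IsUnit.of_mul_eq_one Q.det ?_
    rw [← Matrix.det_mul, hPQ, Matrix.det_one]
  have hdetQ : IsUnit Q.det := by
    refine IsUnit.of_mul_eq_one P.det ?_
    rw [mul_comm, ← Matrix.det_mul, hPQ, Matrix.det_one]
  have key : t - lam • 1 = P * Matrix.diagonal (fun i => d i - lam) * Q := by
    have h1 : lam • (1 : Matrix (Fin n) (Fin n) ℂ) = P * (lam • 1) * Q := by
      rw [Matrix.mul_smul, Matrix.mul_one, Matrix.smul_mul, hPQ]
    rw [ht, h1, ← Matrix.sub_mul, ← Matrix.mul_sub, Matrix.smul_one_eq_diagonal,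
      Matrix.diagonal_sub]
  have hrank : (t - lam • 1).rank = Fintype.card {i // d i - lam ≠ 0} := by
    rw [key, Matrix.rank_mul_eq_left_of_isUnit_det _ _ hdetQ,
      Matrix.rank_mul_eq_right_of_isUnit_det _ _ hdetP, Matrix.rank_diagonal]
  have h2 := eigMult_add_rank n t lam
  rw [hrank, Fintype.card_subtype] at h2
  have h3 : (Finset.univ.filter (fun i => d i = lam)).card
      + (Finset.univ.filter (fun i => d i - lam ≠ 0)).card = n := by
    have : (Finset.univ.filter (fun i => d i = lam))
        = (Finset.univ.filter (fun i => ¬ (d i - lam ≠ 0))) := by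
      apply Finset.filter_congr
      intro i _
      simp [sub_eq_zero]
    have h4 := Finset.card_filter_add_card_filter_not
      (s := (Finset.univ : Finset (Fin n))) (p := fun i => d i - lam ≠ 0)
    simp only [Finset.card_univ, Fintype.card_fin] at h4
    rw [this]
    omega
  omega

lemma eigMult_inv (n : ℕ) (t : Matrix (Fin n) (Fin n) ℂ)
    (hto : tᵀ * t = 1) (lam : ℂ) (hlam : lam ≠ 0) :
    eigMult n t lam = eigMult n t lam⁻¹ := by
  have h1 : (t - lam • 1)ᵀ = tᵀ - lam • 1 := by
    rw [Matrix.transpose_sub, Matrix.transpose_smul, Matrix.transpose_one]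
  have h2 : tᵀ - lam • 1 = (-lam) • (tᵀ * (t - lam⁻¹ • 1)) := by
    rw [Matrix.mul_sub, hto, Matrix.mul_smul, Matrix.mul_one, smul_sub, smul_smul,
      neg_mul, mul_inv_cancel₀ hlam]
    module
  have hdet : IsUnit tᵀ.det := by
    refine IsUnit.of_mul_eq_one t.det ?_
    rw [← Matrix.det_mul, hto, Matrix.det_one]
  have hr : (t - lam • 1).rank = (t - lam⁻¹ • 1).rank := by
    rw [← Matrix.rank_transpose, h1, h2, rank_smul' _ _ _ (neg_ne_zero.mpr hlam),
      Matrix.rank_mul_eq_right_of_isUnit_det _ _ hdet]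
  have ha := eigMult_add_rank n t lam
  have hb := eigMult_add_rank n t lam⁻¹
  omega

lemma charpoly_conj (n : ℕ) (t P Q : Matrix (Fin n) (Fin n) ℂ) (d : Fin n → ℂ)
    (hPQ : P * Q = 1) (hQP : Q * P = 1) (ht : t = P * Matrix.diagonal d * Q) :
    t.charpoly.roots = Multiset.map d Finset.univ.val := by
  classical
  have hC : ∀ A B : Matrix (Fin n) (Fin n) ℂ,
      (A * B).map (C : ℂ →+* ℂ[X]) = A.map C * B.map C := fun A B => Matrix.map_mul
  have hsc : Matrix.charmatrix t = P.map (C : ℂ →+* ℂ[X]) *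
      Matrix.charmatrix (Matrix.diagonal d) * Q.map C := by
    rw [Matrix.charmatrix, Matrix.charmatrix]
    rw [Matrix.mul_sub, Matrix.sub_mul]
    congr 1
    · have h1 : (Matrix.scalar (Fin n)) (X : ℂ[X]) = (X : ℂ[X]) • 1 := by
        rw [Matrix.smul_one_eq_diagonal]; rfl
      rw [h1, Matrix.mul_smul, Matrix.mul_one, Matrix.smul_mul, ← hC, hPQ]
      simp
    · rw [ht]
      simp only [RingHom.mapMatrix_apply]
      rw [hC, hC]
  have hdet : t.charpoly = (Matrix.diagonal d).charpoly := by
    rw [Matrix.charpoly, Matrix.charpoly, hsc, Matrix.det_mul, Matrix.det_mul]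
    have : (P.map (C : ℂ →+* ℂ[X])).det * (Q.map C).det = 1 := by
      rw [← Matrix.det_mul, ← hC, hPQ]
      simp
    ring_nf
    calc (P.map (C : ℂ →+* ℂ[X])).det * (Matrix.charmatrix (diagonal d)).det * (Q.map C).det
        = (Matrix.charmatrix (diagonal d)).det * ((P.map (C : ℂ →+* ℂ[X])).det * (Q.map C).det) := by ring
      _ = (Matrix.charmatrix (diagonal d)).det := by rw [this, mul_one]
  have hdiag : (Matrix.diagonal d).charpoly = ∏ i, (X - C (d i)) := by
    rw [Matrix.charpoly]
    have : Matrix.charmatrix (Matrix.diagonal d) =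
        Matrix.diagonal (fun i => (X : ℂ[X]) - C (d i)) := by
      refine Matrix.ext (fun i j => ?_)
      by_cases h : i = j
      · subst h
        rw [Matrix.charmatrix_apply_eq, Matrix.diagonal_apply_eq d i]
        exact (Matrix.diagonal_apply_eq (fun i => (X : ℂ[X]) - C (d i)) i).symm
      · rw [Matrix.charmatrix_apply_ne _ _ _ h, Matrix.diagonal_apply_ne d h,
          Matrix.diagonal_apply_ne (fun i => (X : ℂ[X]) - C (d i)) h]
        simp
    rw [this, Matrix.det_diagonal]
  rw [hdet, hdiag]
  have : ∏ i, ((X : ℂ[X]) - C (d i)) =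
      ((Finset.univ.val.map d).map (fun a => (X : ℂ[X]) - C a)).prod := by
    rw [Multiset.map_map]
    rfl
  rw [this, Polynomial.roots_multiset_prod_X_sub_C]

noncomputable def recon (n : ℕ) (d : Fin n → ℂ)
    (f : {p : Fin n × Fin n // p.1 < p.2 ∧ d p.1 * d p.2 = 1} → ℂ) :
    Matrix (Fin n) (Fin n) ℂ :=
  Matrix.of fun i j =>
    if h : i < j ∧ d i * d j = 1 then f ⟨(i, j), h⟩
    else if h' : j < i ∧ d j * d i = 1 then -f ⟨(j, i), h'⟩
    else 0

lemma recon_transpose (n : ℕ) (d : Fin n → ℂ)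
    (f : {p : Fin n × Fin n // p.1 < p.2 ∧ d p.1 * d p.2 = 1} → ℂ) :
    (recon n d f)ᵀ = - recon n d f := by
  refine Matrix.ext (fun i j => ?_)
  simp only [Matrix.transpose_apply, Matrix.neg_apply, recon, Matrix.of_apply]
  rcases lt_trichotomy i j with h | h | h
  · have h2 : ¬ j < i := lt_asymm h
    by_cases hc : d i * d j = 1
    · rw [dif_neg (by tauto), dif_pos ⟨h, hc⟩, dif_pos ⟨h, hc⟩]
    · rw [dif_neg (by tauto), dif_neg (by tauto), dif_neg (by tauto), dif_neg (by tauto)]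
      simp
  · subst h
    simp [lt_irrefl]
  · have h2 : ¬ i < j := lt_asymm h
    by_cases hc : d j * d i = 1
    · rw [dif_pos ⟨h, hc⟩, dif_neg (by tauto), dif_pos ⟨h, hc⟩]
      simp
    · rw [dif_neg (by tauto), dif_neg (by tauto), dif_neg (by tauto), dif_neg (by tauto)]
      simp

lemma recon_diag (n : ℕ) (d : Fin n → ℂ)
    (f : {p : Fin n × Fin n // p.1 < p.2 ∧ d p.1 * d p.2 = 1} → ℂ) :
    Matrix.diagonal d * recon n d f * Matrix.diagonal d = recon n d f := by
  refine Matrix.ext (fun i j => ?_)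
  rw [Matrix.mul_diagonal, Matrix.diagonal_mul]
  show d i * (recon n d f i j) * d j = recon n d f i j
  simp only [recon, Matrix.of_apply]
  by_cases h : i < j ∧ d i * d j = 1
  · rw [dif_pos h]
    have : d i * f ⟨(i, j), h⟩ * d j = (d i * d j) * f ⟨(i, j), h⟩ := by ring
    rw [this, h.2, one_mul]
  · rw [dif_neg h]
    by_cases h' : j < i ∧ d j * d i = 1
    · rw [dif_pos h']
      have : d i * -f ⟨(j, i), h'⟩ * d j = (d j * d i) * -f ⟨(j, i), h'⟩ := by ring
      rw [this, h'.2, one_mul]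
    · rw [dif_neg h']
      ring

lemma finrank_skew (n : ℕ) (t P Q : Matrix (Fin n) (Fin n) ℂ) (d : Fin n → ℂ)
    (hPQ : P * Q = 1) (hQP : Q * P = 1) (ht : t = P * Matrix.diagonal d * Q)
    (hto : tᵀ * t = 1) :
    finrank ℂ (skewCommuting n t) =
      (Finset.univ.filter (fun p : Fin n × Fin n => p.1 < p.2 ∧ d p.1 * d p.2 = 1)).card := by
  classical
  have htt : t * tᵀ = 1 := mul_eq_one_comm.mp hto
  have hQt : Q * t = Matrix.diagonal d * Q := by
    rw [ht, ← Matrix.mul_assoc, ← Matrix.mul_assoc, hQP, Matrix.one_mul]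
  have htP : t * P = P * Matrix.diagonal d := by
    rw [ht, Matrix.mul_assoc, hQP, Matrix.mul_one]
  have htQt : tᵀ * Qᵀ = Qᵀ * Matrix.diagonal d := by
    rw [← Matrix.transpose_mul, hQt, Matrix.transpose_mul, Matrix.diagonal_transpose]
  have hPt : Pᵀ * tᵀ = Matrix.diagonal d * Pᵀ := by
    rw [← Matrix.transpose_mul, htP, Matrix.transpose_mul, Matrix.diagonal_transpose]
  have hPQt : Pᵀ * Qᵀ = 1 := by rw [← Matrix.transpose_mul, hQP, Matrix.transpose_one]
  have hQPt : Qᵀ * Pᵀ = 1 := by rw [← Matrix.transpose_mul, hPQ, Matrix.transpose_one]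
  let S := {p : Fin n × Fin n // p.1 < p.2 ∧ d p.1 * d p.2 = 1}
  let eqv : skewCommuting n t ≃ₗ[ℂ] (S → ℂ) :=
    { toFun := fun X => fun p => (Q * X.1 * Qᵀ) p.1.1 p.1.2
      map_add' := by
        intro X Y
        funext p
        simp [Matrix.mul_add, Matrix.add_mul]
      map_smul' := by
        intro c X
        funext p
        simp [Matrix.mul_smul, Matrix.smul_mul]
      invFun := fun f => ⟨P * recon n d f * Pᵀ, by
        constructor
        · rw [Matrix.transpose_mul, Matrix.transpose_mul, Matrix.transpose_transpose,
            recon_transpose]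
          simp only [Matrix.neg_mul, Matrix.mul_neg, Matrix.mul_assoc]
        · have hfix : t * (P * recon n d f * Pᵀ) * tᵀ = P * recon n d f * Pᵀ := by
            calc t * (P * recon n d f * Pᵀ) * tᵀ
                = (t * P) * recon n d f * (Pᵀ * tᵀ) := by
                  simp only [Matrix.mul_assoc]
              _ = P * (Matrix.diagonal d * recon n d f * Matrix.diagonal d) * Pᵀ := by
                  rw [htP, hPt]; simp only [Matrix.mul_assoc]
              _ = P * recon n d f * Pᵀ := by rw [recon_diag]
          calc t * (P * recon n d f * Pᵀ)
              = (t * (P * recon n d f * Pᵀ) * tᵀ) * t := by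
                rw [Matrix.mul_assoc _ tᵀ t, hto, Matrix.mul_one]
            _ = (P * recon n d f * Pᵀ) * t := by rw [hfix]⟩
      left_inv := by
        rintro ⟨X, hX1, hX2⟩
        ext i j : 2
        simp only
        have hfix : t * X * tᵀ = X := by
          rw [hX2, Matrix.mul_assoc, htt, Matrix.mul_one]
        set Z := Q * X * Qᵀ with hZ
        have hZskew : Zᵀ = -Z := by
          rw [hZ, Matrix.transpose_mul, Matrix.transpose_mul, Matrix.transpose_transpose, hX1]
          simp only [Matrix.neg_mul, Matrix.mul_neg, Matrix.mul_assoc]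
        have hZD : Matrix.diagonal d * Z * Matrix.diagonal d = Z := by
          calc Matrix.diagonal d * (Q * X * Qᵀ) * Matrix.diagonal d
              = (Matrix.diagonal d * Q) * X * (Qᵀ * Matrix.diagonal d) := by
                simp only [Matrix.mul_assoc]
            _ = Q * (t * X * tᵀ) * Qᵀ := by
                rw [← hQt, ← htQt]; simp only [Matrix.mul_assoc]
            _ = Q * X * Qᵀ := by rw [hfix]
        have hrecon : recon n d (fun p => Z p.1.1 p.1.2) = Z := by
          refine Matrix.ext (fun a b => ?_)
          simp only [recon, Matrix.of_apply]
          by_cases h : a < b ∧ d a * d b = 1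
          · rw [dif_pos h]
          · rw [dif_neg h]
            by_cases h' : b < a ∧ d b * d a = 1
            · rw [dif_pos h']
              have := congrFun (congrFun hZskew b) a
              simp only [Matrix.transpose_apply, Matrix.neg_apply] at this
              rw [← this]
            · rw [dif_neg h']
              rcases lt_trichotomy a b with hab | hab | hab
              · have hc : ¬ d a * d b = 1 := by tauto
                have := congrFun (congrFun hZD a) b
                rw [Matrix.mul_diagonal, Matrix.diagonal_mul] at this
                have h2 : Z a b * (d a * d b - 1) = 0 := by
                  have : d a * Z a b * d b = Z a b := this
                  linear_combination this
                rcases mul_eq_zero.mp h2 with h3 | h3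
                · exact h3.symm
                · exact absurd (show d a * d b = 1 by linear_combination h3) hc
              · subst hab
                have := congrFun (congrFun hZskew a) a
                simp only [Matrix.transpose_apply, Matrix.neg_apply] at this
                have h4 : Z a a + Z a a = 0 := by linear_combination this
                exact (add_self_eq_zero.mp h4).symm
              · have hc : ¬ d b * d a = 1 := by tauto
                have := congrFun (congrFun hZD a) b
                rw [Matrix.mul_diagonal, Matrix.diagonal_mul] at this
                have h2 : Z a b * (d a * d b - 1) = 0 := by
                  have : d a * Z a b * d b = Z a b := this
                  linear_combination this
                rcases mul_eq_zero.mp h2 with h3 | h3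
                · exact h3.symm
                · refine absurd (show d b * d a = 1 by linear_combination h3) hc
        show (P * recon n d (fun p => Z p.1.1 p.1.2) * Pᵀ) i j = X i j
        rw [hrecon, hZ]
        calc (P * (Q * X * Qᵀ) * Pᵀ) i j
            = ((P * Q) * X * (Qᵀ * Pᵀ)) i j := by simp only [Matrix.mul_assoc]
          _ = X i j := by rw [hPQ, hQPt, Matrix.one_mul, Matrix.mul_one]
      right_inv := by
        intro f
        funext p
        simp only
        have : Q * (P * recon n d f * Pᵀ) * Qᵀ = recon n d f := by
          calc Q * (P * recon n d f * Pᵀ) * Qᵀ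
              = (Q * P) * recon n d f * (Pᵀ * Qᵀ) := by simp only [Matrix.mul_assoc]
            _ = recon n d f := by rw [hQP, hPQt, Matrix.one_mul, Matrix.mul_one]
        rw [this]
        simp only [recon, Matrix.of_apply]
        rw [dif_pos p.2] }
  rw [eqv.finrank_eq]
  rw [Module.finrank_pi, Fintype.card_subtype]

lemma count_pairs (n : ℕ) (d : Fin n → ℂ) (hd0 : ∀ i, d i ≠ 0)
    (hc : ∀ i : Fin n,
      (univ.filter (fun j => d j = (d i)⁻¹)).card = (univ.filter (fun j => d j = d i)).card) :
    ((univ.filter (fun p : Fin n × Fin n => p.1 < p.2 ∧ d p.1 * d p.2 = 1)).card : ℚ) =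
      (((univ.filter (fun i => d i = 1)).card : ℕ).choose 2 : ℚ)
      + (((univ.filter (fun i => d i = (-1))).card : ℕ).choose 2 : ℚ)
      + (1/2) * ∑ lam ∈ (Finset.univ.image d) \ {1, -1},
          (((univ.filter (fun i => d i = lam)).card : ℚ))^2 := by
  classical
  set c : ℂ → ℕ := fun lam => (univ.filter (fun i => d i = lam)).card with hcdef
  set A : Finset (Fin n × Fin n) :=
    univ.filter (fun p : Fin n × Fin n => p.1 < p.2 ∧ d p.1 * d p.2 = 1) with hA
  set B : Finset (Fin n × Fin n) :=
    univ.filter (fun p : Fin n × Fin n => p.2 < p.1 ∧ d p.1 * d p.2 = 1) with hB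
  set Dg : Finset (Fin n × Fin n) :=
    univ.filter (fun p : Fin n × Fin n => p.1 = p.2 ∧ d p.1 * d p.2 = 1) with hDg
  set U : Finset (Fin n × Fin n) :=
    univ.filter (fun p : Fin n × Fin n => d p.1 * d p.2 = 1) with hU
  -- U is the disjoint union of A, B, Dg
  have hUnion : U = (A ∪ B) ∪ Dg := by
    ext p
    simp only [hU, hA, hB, hDg, Finset.mem_filter, Finset.mem_union, Finset.mem_univ, true_and]
    constructor
    · intro h
      rcases lt_trichotomy p.1 p.2 with h1 | h1 | h1
      · exact Or.inl (Or.inl ⟨h1, h⟩)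
      · exact Or.inr ⟨h1, h⟩
      · exact Or.inl (Or.inr ⟨h1, h⟩)
    · rintro ((⟨_, h⟩ | ⟨_, h⟩) | ⟨_, h⟩) <;> exact h
  have hdisj1 : Disjoint A B := by
    rw [Finset.disjoint_left]
    intro p hp hq
    simp only [hA, hB, Finset.mem_filter, Finset.mem_univ, true_and] at hp hq
    exact absurd hq.1 (lt_asymm hp.1)
  have hdisj2 : Disjoint (A ∪ B) Dg := by
    rw [Finset.disjoint_left]
    intro p hp hq
    simp only [hA, hB, hDg, Finset.mem_union, Finset.mem_filter, Finset.mem_univ, true_and]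
      at hp hq
    rcases hp with ⟨h1, _⟩ | ⟨h1, _⟩
    · exact absurd hq.1 (ne_of_lt h1)
    · exact absurd hq.1 (ne_of_gt h1)
  have hcardBA : B.card = A.card := by
    apply Finset.card_bij (fun p _ => Prod.swap p)
    · rintro p hp
      simp only [hB, Finset.mem_filter, Finset.mem_univ, true_and] at hp
      simp only [hA, Finset.mem_filter, Finset.mem_univ, true_and, Prod.fst_swap, Prod.snd_swap]
      exact ⟨hp.1, by rw [mul_comm]; exact hp.2⟩
    · rintro p _ q _ h
      exact Prod.swap_injective h
    · rintro p hp
      simp only [hA, Finset.mem_filter, Finset.mem_univ, true_and] at hp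
      refine ⟨Prod.swap p, ?_, (Prod.swap_swap p).symm⟩
      simp only [hB, Finset.mem_filter, Finset.mem_univ, true_and, Prod.fst_swap, Prod.snd_swap]
      exact ⟨hp.1, by rw [mul_comm]; exact hp.2⟩
  have hcardDg : Dg.card = c 1 + c (-1) := by
    have h1 : Dg.card = (univ.filter (fun i : Fin n => d i * d i = 1)).card := by
      apply Finset.card_bij (fun p _ => p.1)
      · rintro p hp
        simp only [hDg, Finset.mem_filter, Finset.mem_univ, true_and] at hp
        simp only [Finset.mem_filter, Finset.mem_univ, true_and]
        rw [← hp.1] at hp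
        exact hp.2
      · rintro p hp q hq h
        simp only [hDg, Finset.mem_filter, Finset.mem_univ, true_and] at hp hq
        exact Prod.ext h (by rw [← hp.1, ← hq.1]; exact h)
      · rintro i hi
        simp only [Finset.mem_filter, Finset.mem_univ, true_and] at hi
        exact ⟨(i, i), by simp [hDg, hi], rfl⟩
    rw [h1]
    have h2 : (univ.filter (fun i : Fin n => d i * d i = 1))
        = (univ.filter (fun i => d i = 1)) ∪ (univ.filter (fun i => d i = -1)) := by
      rw [← Finset.filter_or]
      apply Finset.filter_congr
      intro i _
      exact mul_self_eq_one_iff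
    rw [h2, Finset.card_union_of_disjoint]
    rw [Finset.disjoint_left]
    intro i hi1 hi2
    simp only [Finset.mem_filter, Finset.mem_univ, true_and] at hi1 hi2
    rw [hi1] at hi2
    norm_num at hi2
  -- U card by fibers
  have hUcard : U.card = ∑ i, c (d i) := by
    have h1 : U.card = ∑ p ∈ (univ : Finset (Fin n × Fin n)), if d p.1 * d p.2 = 1 then 1 else 0 := by
      rw [hU, ← Finset.sum_filter]
      simp
    rw [h1, ← Finset.univ_product_univ, Finset.sum_product]
    congr 1
    funext i
    have : ∀ j, (if d i * d j = 1 then (1:ℕ) else 0) = (if d j = (d i)⁻¹ then 1 else 0) := by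
      intro j
      congr 1
      simp only [eq_iff_iff]
      constructor
      · intro h
        rw [← inv_mul_cancel_left₀ (hd0 i) (d j), h, mul_one]
      · intro h
        rw [h, mul_inv_cancel₀ (hd0 i)]
    simp_rw [this]
    rw [← Finset.sum_filter]
    simp only [Finset.sum_const, smul_eq_mul, mul_one]
    exact hc i
  have hsum_comp : ∑ i, c (d i) = ∑ lam ∈ univ.image d, (c lam) * (c lam) := by
    rw [Finset.sum_comp c d]
    apply Finset.sum_congr rfl
    intro lam _
    rw [smul_eq_mul]
  -- split the image sum
  have himage : ∀ lam : ℂ, lam ∉ univ.image d → c lam = 0 := by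
    intro lam h
    rw [hcdef]
    simp only [Finset.card_eq_zero, Finset.filter_eq_empty_iff]
    intro i _
    intro hcontra
    exact h (Finset.mem_image.mpr ⟨i, Finset.mem_univ i, hcontra⟩)
  have hsplit : (∑ lam ∈ univ.image d, ((c lam : ℚ)) * (c lam))
      = (∑ lam ∈ (univ.image d) \ {1, -1}, ((c lam : ℚ))^2) + (c 1 : ℚ)^2 + (c (-1) : ℚ)^2 := by
    have hsub : (univ.image d) ∩ ({1, -1} : Finset ℂ) ⊆ univ.image d := Finset.inter_subset_left
    have h0 : (univ.image d) \ ({1, -1} : Finset ℂ)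
        = (univ.image d) \ ((univ.image d) ∩ {1, -1}) := by
      rw [Finset.sdiff_inter_self_left]
    have h1 := Finset.sum_sdiff (f := fun lam => ((c lam : ℚ))^2) hsub
    have h2 : ∑ lam ∈ (univ.image d) ∩ ({1, -1} : Finset ℂ), ((c lam : ℚ))^2
        = ∑ lam ∈ ({1, -1} : Finset ℂ), ((c lam : ℚ))^2 := by
      apply Finset.sum_subset Finset.inter_subset_right
      intro lam _ hnotin
      have : lam ∉ univ.image d := by
        intro hmem
        exact hnotin (Finset.mem_inter.mpr ⟨hmem, ‹lam ∈ ({1, -1} : Finset ℂ)›⟩)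
      rw [himage lam this]
      norm_num
    have h3 : ∑ lam ∈ ({1, -1} : Finset ℂ), ((c lam : ℚ))^2 = (c 1 : ℚ)^2 + (c (-1) : ℚ)^2 :=
      Finset.sum_pair (by norm_num : (1 : ℂ) ≠ -1)
    beta_reduce at h1
    rw [h2, h3] at h1
    simp_rw [← sq]
    rw [h0, ← h1]
    ring
  -- assemble
  have hUc : U.card = A.card + A.card + (c 1 + c (-1)) := by
    rw [hUnion, Finset.card_union_of_disjoint hdisj2, Finset.card_union_of_disjoint hdisj1,
      hcardBA, hcardDg]
  have hkey : (A.card : ℚ) + A.card + c 1 + c (-1)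
      = (∑ lam ∈ (univ.image d) \ {1, -1}, ((c lam : ℚ))^2) + (c 1 : ℚ)^2 + (c (-1) : ℚ)^2 := by
    rw [← hsplit]
    have : ((U.card : ℚ)) = ∑ lam ∈ univ.image d, ((c lam : ℚ)) * (c lam) := by
      rw [hUcard, hsum_comp]
      push_cast
      rfl
    rw [← this, hUc]
    push_cast
    ring
  have hch1 : (((c 1 : ℕ)).choose 2 : ℚ) = (c 1 : ℚ) * ((c 1 : ℚ) - 1) / 2 :=
    Nat.cast_choose_two (K := ℚ) _
  have hch2 : (((c (-1) : ℕ)).choose 2 : ℚ) = (c (-1) : ℚ) * ((c (-1) : ℚ) - 1) / 2 :=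
    Nat.cast_choose_two (K := ℚ) _
  rw [hch1, hch2]
  linarith

/-- If `t ∈ SO_n(ℂ)` has finite order, then the dimension of the space of skew-symmetric
matrices commuting with `t` is `C(m₁,2) + C(m₋₁,2) + (1/2)·∑_{λ ≠ ±1} m_λ²`, where `m_λ` is the
multiplicity of the eigenvalue `λ` of `t` and the sum runs over the eigenvalues (roots of the
characteristic polynomial) of `t` different from `1` and `-1`. -/
theorem finrank_skewCommuting (n : ℕ) (hn : 1 ≤ n) (t : Matrix (Fin n) (Fin n) ℂ)
    (hto : tᵀ * t = 1) (htd : t.det = 1) (k : ℕ) (hk : 1 ≤ k) (htk : t ^ k = 1) :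
    (finrank ℂ (skewCommuting n t) : ℚ) =
      (eigMult n t 1).choose 2 + (eigMult n t (-1)).choose 2 +
        (1 / 2) * ∑ lam ∈ t.charpoly.roots.toFinset \ {1, -1}, (eigMult n t lam : ℚ) ^ 2 := by
  classical
  obtain ⟨P, Q, d, hPQ, hQP, ht⟩ := exists_diag n k hk t htk
  -- eigenvalues are nonzero
  have hdet : (∏ i, d i) = 1 := by
    have h1 : t.det = P.det * (∏ i, d i) * Q.det := by
      rw [ht, Matrix.det_mul, Matrix.det_mul, Matrix.det_diagonal]
    have h2 : P.det * Q.det = 1 := by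
      rw [← Matrix.det_mul, hPQ, Matrix.det_one]
    rw [htd] at h1
    calc (∏ i, d i) = (P.det * Q.det) * (∏ i, d i) := by rw [h2, one_mul]
      _ = P.det * (∏ i, d i) * Q.det := by ring
      _ = 1 := h1.symm
  have hd0 : ∀ i, d i ≠ 0 := by
    intro i hzero
    have : (∏ j, d j) = 0 := Finset.prod_eq_zero (Finset.mem_univ i) hzero
    rw [hdet] at this
    exact one_ne_zero this
  have hcnt : ∀ lam : ℂ, eigMult n t lam
      = (Finset.univ.filter (fun i => d i = lam)).card :=
    eigMult_eq_count n t P Q d hPQ ht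
  have hcc : ∀ i : Fin n,
      (Finset.univ.filter (fun j => d j = (d i)⁻¹)).card
        = (Finset.univ.filter (fun j => d j = d i)).card := by
    intro i
    rw [← hcnt, ← hcnt, ← eigMult_inv n t hto (d i) (hd0 i)]
  have hroots : t.charpoly.roots.toFinset = Finset.univ.image d := by
    rw [charpoly_conj n t P Q d hPQ hQP ht]
    ext lam
    simp [Multiset.mem_toFinset, Finset.mem_image, List.mem_ofFn]
  have hfr := finrank_skew n t P Q d hPQ hQP ht hto
  rw [hfr, hroots]
  have hsum : ∑ lam ∈ Finset.univ.image d \ {1, -1}, (eigMult n t lam : ℚ) ^ 2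
      = ∑ lam ∈ Finset.univ.image d \ {1, -1},
          (((Finset.univ.filter (fun i => d i = lam)).card : ℚ)) ^ 2 := by
    apply Finset.sum_congr rfl
    intro lam _
    rw [hcnt]
  rw [hsum, hcnt, hcnt]
  exact count_pairs n d hd0 hcc
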